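/- The Gauss curvature of the metric ds² = P(y)(dx² + dy²) on the upper half-plane ℝ × (0,∞), which equals K(y) = -(1/(2P(y))) (d²/dy²)(log P(y)) · (1/2), is given explicitly by K(y) = -96 e^{2y}(e^{8y} + 2e^{6y} + 18e^{4y} + 2e^{2y} + 1) / (e^{4y} + 10e^{2y} + 1)^3. Equivalently: for the conformal metric e^{2φ}(dx²+dy²) with e^{2φ} = P(y), the curvature K = -e^{-2φ} Δφ equals the stated expression. -/

import Mathlib

open Real Filter

noncomputable def P (y : ℝ) : ℝ :=
  (Real.exp (4*y) + 10 * Real.exp (2*y) + 1) / (4 * (Real.exp (2*y) - 1)^2)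

noncomputable def phi (y : ℝ) : ℝ := (1/2) * Real.log (P y)

noncomputable def g (y : ℝ) : ℝ :=
  2*Real.exp (2*y)*(Real.exp (2*y)+5)/(Real.exp (2*y)^2+10*Real.exp (2*y)+1)
  - 2*Real.exp (2*y)/(Real.exp (2*y)-1)

noncomputable def g2 (y : ℝ) : ℝ :=
  (20*Real.exp (2*y)^3+8*Real.exp (2*y)^2+20*Real.exp (2*y))
    /(Real.exp (2*y)^2+10*Real.exp (2*y)+1)^2
  + 4*Real.exp (2*y)/(Real.exp (2*y)-1)^2

lemma hE (y : ℝ) : HasDerivAt (fun y : ℝ => Real.exp (2*y)) (2 * Real.exp (2*y)) y := by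
  have := (((hasDerivAt_id y).const_mul 2).exp)
  simp only [id_eq] at this
  convert this using 1; ring

lemma hE4 (y : ℝ) : HasDerivAt (fun y : ℝ => Real.exp (4*y)) (4 * Real.exp (4*y)) y := by
  have := (((hasDerivAt_id y).const_mul 4).exp)
  simp only [id_eq] at this
  convert this using 1; ring

lemma key_pos (y : ℝ) (hy : 0 < y) : 1 < Real.exp (2*y) := by
  have : (0:ℝ) < 2*y := by linarith
  calc (1:ℝ) = Real.exp 0 := by simp
  _ < Real.exp (2*y) := Real.exp_lt_exp.mpr this

lemma hphi (y : ℝ) (hy : 0 < y) : HasDerivAt phi (g y) y := by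
  have hu := key_pos y hy
  set u := Real.exp (2*y) with hu_def
  have hu0 : 0 < u := lt_trans one_pos hu
  have h1 : u - 1 ≠ 0 := by linarith
  have hq : 0 < u^2 + 10*u + 1 := by positivity
  have hnum : 0 < Real.exp (4*y) + 10 * Real.exp (2*y) + 1 := by positivity
  have hd : HasDerivAt (fun y : ℝ => 4*(Real.exp (2*y)-1)^2)
      (4*(2*(Real.exp (2*y)-1)*(2*Real.exp (2*y)))) y := by
    have : HasDerivAt (fun y : ℝ => 4*(Real.exp (2*y)-1)^2) _ y := (((hE y).sub_const 1).pow 2).const_mul 4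
    convert this using 1; ring
  have hn : HasDerivAt (fun y : ℝ => Real.exp (4*y) + 10*Real.exp (2*y) + 1)
      (4*Real.exp (4*y) + 10*(2*Real.exp (2*y))) y := by
    exact ((hE4 y).add ((hE y).const_mul 10)).add_const 1
  have hdne : 4*(Real.exp (2*y)-1)^2 ≠ 0 := by
    have : (0:ℝ) < 4*(u-1)^2 := by positivity
    simpa [hu_def] using ne_of_gt this
  have hP : HasDerivAt P
      (((4*Real.exp (4*y) + 10*(2*Real.exp (2*y))) * (4*(Real.exp (2*y)-1)^2)
        - (Real.exp (4*y) + 10*Real.exp (2*y) + 1) * (4*(2*(Real.exp (2*y)-1)*(2*Real.exp (2*y)))))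
        / (4*(Real.exp (2*y)-1)^2)^2) y := by
    exact hn.div hd hdne
  have hPpos : 0 < P y := by
    unfold P
    positivity
  have : HasDerivAt phi _ y := (hP.log (ne_of_gt hPpos)).const_mul (1/2)
  convert this using 1
  have e4 : Real.exp (4*y) = u^2 := by
    rw [hu_def, sq, ← Real.exp_add]; ring_nf
  unfold g P
  rw [e4]
  rw [← hu_def]
  field_simp
  ring

lemma hg (y : ℝ) (hy : 0 < y) : HasDerivAt g (g2 y) y := by
  have hu := key_pos y hy
  have hu0 : 0 < Real.exp (2*y) := Real.exp_pos _
  have h1 : Real.exp (2*y) - 1 ≠ 0 := by linarith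
  have hq : (0:ℝ) < Real.exp (2*y)^2 + 10*Real.exp (2*y) + 1 := by positivity
  have hf1 := (((hE y).const_mul 2).mul ((hE y).add_const 5)).div
    ((((hE y).pow 2).add ((hE y).const_mul 10)).add_const 1) (ne_of_gt hq)
  have hf2 := ((hE y).const_mul 2).div ((hE y).sub_const 1) h1
  have hbig : HasDerivAt (fun y : ℝ => 2*Real.exp (2*y)*(Real.exp (2*y)+5)/(Real.exp (2*y)^2+10*Real.exp (2*y)+1)
    - 2*Real.exp (2*y)/(Real.exp (2*y)-1)) _ y := hf1.sub hf2
  unfold g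
  convert hbig using 1
  unfold g2
  simp only [Pi.add_apply, Pi.mul_apply, Pi.pow_apply, Nat.cast_ofNat, Nat.add_one_sub_one, pow_one]
  field_simp
  ring

theorem stmt_2 :
    ∀ y : ℝ, 0 < y →
      -(1 / P y) * deriv (deriv phi) y =
        -(96 * Real.exp (2*y) *
            (Real.exp (8*y) + 2 * Real.exp (6*y) + 18 * Real.exp (4*y) +
              2 * Real.exp (2*y) + 1)) /
          (Real.exp (4*y) + 10 * Real.exp (2*y) + 1)^3 := by
  intro y hy
  have hev : deriv phi =ᶠ[nhds y] g := by
    filter_upwards [Ioi_mem_nhds hy] with z hz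
    exact (hphi z hz).deriv
  have h2 : deriv (deriv phi) y = g2 y := by
    rw [hev.deriv_eq]
    exact (hg y hy).deriv
  rw [h2]
  have hu := key_pos y hy
  have hu0 : 0 < Real.exp (2*y) := Real.exp_pos _
  have h1 : Real.exp (2*y) - 1 ≠ 0 := by linarith
  have hq : (0:ℝ) < Real.exp (2*y)^2 + 10*Real.exp (2*y) + 1 := by positivity
  have e4 : Real.exp (4*y) = Real.exp (2*y)^2 := by
    rw [sq, ← Real.exp_add]; ring_nf
  have e6 : Real.exp (6*y) = Real.exp (2*y)^3 := by
    rw [pow_succ, sq, ← Real.exp_add, ← Real.exp_add]; ring_nf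
  have e8 : Real.exp (8*y) = Real.exp (2*y)^4 := by
    rw [pow_succ, pow_succ, sq, ← Real.exp_add, ← Real.exp_add, ← Real.exp_add]; ring_nf
  rw [e4, e6, e8]
  unfold P g2
  rw [e4]
  field_simp
  ring
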